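/- Every characteristic subgroup of a homocyclic p-group of rank at least 2 is of the form p^n B for some n. More precisely: if B = ⊕_{i∈I} ⟨a_i⟩ with |I| ≥ 2 and each a_i of order p^k, and H is a nonzero characteristic subgroup of B, then H = p^n B for some 0 ≤ n < k. -/

import Mathlib

def zsmulHom {A : Type*} [AddCommGroup A] (n : ℤ) : A →+ A where
  toFun x := n • x
  map_zero' := smul_zero n
  map_add' x y := smul_add n x y

/-- A linear functional `z ↦ c * z i`. -/
def coordMul {R ι : Type*} [CommRing R] (c : R) (i : ι) : (ι →₀ R) →ₗ[R] R where
  toFun z := c * z i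
  map_add' x y := by simp [mul_add]
  map_smul' r x := by simp [Finsupp.smul_apply, smul_eq_mul]; ring

/-- A transvection-type additive automorphism `z ↦ z + f z • w` when `f w = 0`. -/
noncomputable def addTransvection {R ι : Type*} [CommRing R] (f : (ι →₀ R) →ₗ[R] R) (w : ι →₀ R)
    (hfw : f w = 0) : (ι →₀ R) ≃+ (ι →₀ R) where
  toFun z := z + f z • w
  invFun z := z - f z • w
  left_inv z := by simp [map_add, map_smul, hfw, smul_eq_mul]
  right_inv z := by simp [map_sub, map_smul, hfw, smul_eq_mul]
  map_add' x y := by simp [map_add, add_smul]; abel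

/-- Scaling by a unit as an additive automorphism. -/
noncomputable def unitScale {R ι : Type*} [CommRing R] (u : Rˣ) : (ι →₀ R) ≃+ (ι →₀ R) where
  toFun z := (u : R) • z
  invFun z := ((u⁻¹ : Rˣ) : R) • z
  left_inv z := by show _ • _ • _ = _; rw [smul_smul, Units.inv_mul, one_smul]
  right_inv z := by show _ • _ • _ = _; rw [smul_smul, Units.mul_inv, one_smul]
  map_add' x y := smul_add _ x y

lemma dvd_val_of_not_isUnit {p k : ℕ} (hp : p.Prime) (c : ZMod (p ^ k))
    (h : ¬ IsUnit c) : p ∣ c.val := by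
  haveI : NeZero (p ^ k) := ⟨pow_ne_zero k hp.ne_zero⟩
  by_contra hd
  apply h
  have h1 : IsUnit ((c.val : ℕ) : ZMod (p ^ k)) := by
    rw [ZMod.isUnit_iff_coprime]
    exact Nat.Coprime.pow_right k (((hp.coprime_iff_not_dvd).mpr hd).symm)
  rwa [ZMod.natCast_rightInverse c] at h1

lemma exists_smul_eq_of_dvd {p k : ℕ} (hp : p.Prime) {ι : Type*} (n : ℕ)
    (x : ι →₀ ZMod (p ^ k)) (h : ∀ i, p ^ n ∣ (x i).val) :
    ∃ y : ι →₀ ZMod (p ^ k), ((p : ZMod (p ^ k)) ^ n) • y = x := by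
  haveI : NeZero (p ^ k) := ⟨pow_ne_zero k hp.ne_zero⟩
  refine ⟨x.mapRange (fun c => ((c.val / p ^ n : ℕ) : ZMod (p ^ k))) (by simp), ?_⟩
  ext i
  rw [Finsupp.smul_apply, Finsupp.mapRange_apply, smul_eq_mul]
  rw [show ((p : ZMod (p ^ k)) ^ n) = ((p ^ n : ℕ) : ZMod (p ^ k)) by push_cast; ring]
  rw [← Nat.cast_mul, Nat.mul_div_cancel' (h i), ZMod.natCast_rightInverse]

/-- The subgroup `pⁿB`. -/
noncomputable def Pgrp (p k : ℕ) (ι : Type*) (n : ℕ) : AddSubgroup (ι →₀ ZMod (p ^ k)) :=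
  AddSubgroup.map (zsmulHom ((p : ℤ) ^ n)) ⊤

lemma mem_Pgrp {p k : ℕ} {ι : Type*} (n : ℕ) (x : ι →₀ ZMod (p ^ k)) :
    x ∈ Pgrp p k ι n ↔ ∃ y, ((p : ZMod (p ^ k)) ^ n) • y = x := by
  have key : ∀ y : ι →₀ ZMod (p ^ k),
      zsmulHom ((p : ℤ) ^ n) y = ((p : ZMod (p ^ k)) ^ n) • y := by
    intro y
    show ((p : ℤ) ^ n) • y = _
    rw [show ((p : ZMod (p ^ k)) ^ n) = (((p : ℤ) ^ n : ℤ) : ZMod (p ^ k)) by push_cast; ring,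
      Int.cast_smul_eq_zsmul]
  constructor
  · rintro ⟨y, -, rfl⟩
    exact ⟨y, (key y).symm⟩
  · rintro ⟨y, rfl⟩
    exact ⟨y, trivial, key y⟩

theorem stmt14 (p k : ℕ) (hp : p.Prime) (hk : 1 ≤ k) (ι : Type*)
    (hι : ∃ i j : ι, i ≠ j)
    (H : AddSubgroup (ι →₀ ZMod (p ^ k)))
    (hH : ∀ φ : (ι →₀ ZMod (p ^ k)) ≃+ (ι →₀ ZMod (p ^ k)), ∀ x ∈ H, φ x ∈ H)
    (hne : H ≠ ⊥) :
    ∃ n : ℕ, n < k ∧ H = AddSubgroup.map (zsmulHom ((p : ℤ) ^ n)) ⊤ := by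
  classical
  haveI : NeZero (p ^ k) := ⟨pow_ne_zero k hp.ne_zero⟩
  set R := ZMod (p ^ k)
  -- the group is of exponent p^k, so some element of H is not in p^k B
  have hQk : ∃ x ∈ H, x ∉ Pgrp p k ι ((k - 1) + 1) := by
    obtain ⟨x, hxH, hx0⟩ : ∃ x ∈ H, x ≠ 0 := by
      by_contra hc; push_neg at hc
      exact hne ((AddSubgroup.eq_bot_iff_forall H).mpr hc)
    refine ⟨x, hxH, ?_⟩
    rw [Nat.sub_add_cancel hk]
    intro hxP
    obtain ⟨y, hy⟩ := (mem_Pgrp k x).mp hxP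
    apply hx0
    rw [← hy, show ((p : R) ^ k) = 0 by rw [← Nat.cast_pow, ZMod.natCast_self], zero_smul]
  have hQex : ∃ m, ∃ x ∈ H, x ∉ Pgrp p k ι (m + 1) := ⟨k - 1, hQk⟩
  set n := Nat.find hQex with hn
  have hnk : n < k := by
    have h1 : n ≤ k - 1 := Nat.find_min' hQex hQk
    omega
  -- every element of H lies in pⁿB
  have hHsub : ∀ x ∈ H, x ∈ Pgrp p k ι n := by
    intro x hx
    by_cases h0 : n = 0
    · rw [h0, mem_Pgrp]
      exact ⟨x, by rw [pow_zero, one_smul]⟩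
    · obtain ⟨m, hm⟩ := Nat.exists_eq_succ_of_ne_zero h0
      have hmin := Nat.find_min hQex (m := m) (by omega)
      push_neg at hmin
      rw [hm]
      exact hmin x hx
  -- a witness of exact height n
  obtain ⟨x, hxH, hxP⟩ := Nat.find_spec hQex
  obtain ⟨y, hy⟩ := (mem_Pgrp n x).mp (hHsub x hxH)
  -- some coordinate of y is a unit
  have hunit : ∃ i, IsUnit (y i) := by
    by_contra hc; push_neg at hc
    have hdvd : ∀ i, p ^ 1 ∣ (y i).val := fun i => by
      simpa using dvd_val_of_not_isUnit hp _ (hc i)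
    obtain ⟨z, hz⟩ := exists_smul_eq_of_dvd hp 1 y hdvd
    apply hxP
    rw [mem_Pgrp]
    exact ⟨z, by rw [← hy, ← hz, smul_smul, pow_one, ← pow_succ]⟩
  obtain ⟨i, u, hu⟩ := hunit
  have hxi : x i = (p : R) ^ n * y i := by
    rw [← hy, Finsupp.smul_apply, smul_eq_mul]
  -- the transvection sending x to a multiple of a basis vector
  set w : ι →₀ R := (u : R) • Finsupp.single i 1 - y with hw
  have hwi : coordMul ((u⁻¹ : Rˣ) : R) i w = 0 := by
    show ((u⁻¹ : Rˣ) : R) * w i = 0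
    rw [hw, Finsupp.sub_apply, Finsupp.smul_apply, Finsupp.single_eq_same, smul_eq_mul,
      mul_one, hu, sub_self, mul_zero]
  have hH1 : Finsupp.single i ((p : R) ^ n * (u : R)) ∈ H := by
    have hmem := hH (addTransvection (coordMul ((u⁻¹ : Rˣ) : R) i) w hwi) x hxH
    have hax : (addTransvection (coordMul ((u⁻¹ : Rˣ) : R) i) w hwi) x
        = Finsupp.single i ((p : R) ^ n * (u : R)) := by
      show x + (((u⁻¹ : Rˣ) : R) * x i) • w = _
      have h1 : ((u⁻¹ : Rˣ) : R) * x i = (p : R) ^ n := by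
        rw [hxi, ← hu, mul_comm ((p : R) ^ n), ← mul_assoc, Units.inv_mul, one_mul]
      rw [h1, hw, smul_sub, ← hy]
      rw [show ∀ a c : ι →₀ R, a + (c - a) = c from fun a c => by abel]
      rw [smul_smul, Finsupp.smul_single, smul_eq_mul, mul_one]
    rwa [hax] at hmem
  have hH2 : Finsupp.single i ((p : R) ^ n) ∈ H := by
    have hmem := hH (unitScale u⁻¹) _ hH1
    have hax : (unitScale (ι := ι) u⁻¹) (Finsupp.single i ((p : R) ^ n * (u : R)))
        = Finsupp.single i ((p : R) ^ n) := by
      show ((u⁻¹ : Rˣ) : R) • Finsupp.single i ((p : R) ^ n * (u : R)) = _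
      rw [Finsupp.smul_single, smul_eq_mul, mul_comm ((p : R) ^ n), ← mul_assoc,
        Units.inv_mul, one_mul]
    rwa [hax] at hmem
  have hH3 : ∀ j, Finsupp.single j ((p : R) ^ n) ∈ H := by
    intro j
    have hmem := hH (Finsupp.domCongr (Equiv.swap i j)) _ hH2
    have hax : (Finsupp.domCongr (M := R) (Equiv.swap i j)) (Finsupp.single i ((p : R) ^ n))
        = Finsupp.single j ((p : R) ^ n) := by
      rw [Finsupp.domCongr_apply, Finsupp.equivMapDomain_single, Equiv.swap_apply_left]
    rwa [hax] at hmem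
  -- pⁿB ⊆ H
  have hPsub : ∀ z ∈ Pgrp p k ι n, z ∈ H := by
    intro z hz
    obtain ⟨y', rfl⟩ := (mem_Pgrp n z).mp hz
    clear hz
    induction y' using Finsupp.induction with
    | zero => rw [smul_zero]; exact H.zero_mem
    | single_add a b f _ _ ihf =>
        rw [smul_add]
        refine H.add_mem ?_ ihf
        have heq : (p : R) ^ n • Finsupp.single a b = b.val • Finsupp.single a ((p : R) ^ n) := by
          rw [Finsupp.smul_single, Finsupp.smul_single, smul_eq_mul]
          congr 1
          rw [nsmul_eq_mul, ZMod.natCast_rightInverse b, mul_comm]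
        rw [heq]
        exact AddSubgroup.nsmul_mem H (hH3 a) b.val
  exact ⟨n, hnk, AddSubgroup.ext fun z => ⟨hHsub z, hPsub z⟩⟩
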